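/- Let E be a real inner product space, let i(x) = ‖x‖⁻² • x be the sphere inversion and Di(x) its Fréchet derivative at x ≠ 0. Then for all v, w ∈ E one has ⟨Di(x)v, Di(x)w⟩ = ‖x‖⁻⁴·⟨v, w⟩, and consequently the averaged metric satisfies (1/2)·(⟨v, w⟩ + ⟨Di(x)v, Di(x)w⟩) = ρ(x)·⟨v, w⟩, where ρ(x) = 1/2 + 1/(2‖x‖⁴). -/

import Mathlib

open scoped RealInnerProductSpace

/-- For the sphere inversion `i(x) = ‖x‖⁻² • x` on a real inner product space, the
derivative satisfies `⟨Di(x)v, Di(x)w⟩ = ‖x‖⁻⁴ ⟨v, w⟩`, and consequently the averaged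
metric `(1/2)(⟨v,w⟩ + ⟨Di(x)v, Di(x)w⟩)` equals `ρ(x)·⟨v,w⟩` with
`ρ(x) = 1/2 + 1/(2‖x‖⁴)`. -/
theorem sphere_inversion_conformal
    {E : Type*} [NormedAddCommGroup E] [InnerProductSpace ℝ E]
    (i : E → E) (hi : ∀ x, i x = (‖x‖ ^ 2)⁻¹ • x)
    (ρ : E → ℝ) (hρ : ∀ x, ρ x = 1 / 2 + 1 / (2 * ‖x‖ ^ 4))
    (x : E) (hx : x ≠ 0) :
    ∀ v w : E,
      ⟪fderiv ℝ i x v, fderiv ℝ i x w⟫ = (‖x‖ ^ 4)⁻¹ * ⟪v, w⟫ ∧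
      (1 / 2) * (⟪v, w⟫ + ⟪fderiv ℝ i x v, fderiv ℝ i x w⟫) = ρ x * ⟪v, w⟫ := by
  have hne : ⟪x, x⟫ ≠ 0 := inner_self_ne_zero.mpr hx
  have hD : ∀ v : E,
      fderiv ℝ i x v = (⟪x, x⟫)⁻¹ • v - ((⟪x, x⟫ ^ 2)⁻¹ * (2 * ⟪x, v⟫)) • x := by
    have h1 := (hasFDerivAt_id x).inner ℝ (hasFDerivAt_id x)
    have h2 := ((hasDerivAt_inv (by simpa using hne)).comp_hasFDerivAt x h1).smul
      (hasFDerivAt_id x)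
    simp only [Function.comp, id] at h2
    have hieq : i = fun y : E => (⟪y, y⟫)⁻¹ • y := by
      funext y; rw [hi y, real_inner_self_eq_norm_sq]
    intro v
    rw [hieq, (show HasFDerivAt (fun y : E => (⟪y, y⟫)⁻¹ • y) _ x from h2).fderiv]
    simp [real_inner_comm v x, sub_smul, smul_smul, fderivInnerCLM_apply]
    ring_nf
    rw [sub_eq_add_neg]
  intro v w
  have key : ⟪fderiv ℝ i x v, fderiv ℝ i x w⟫ = (‖x‖ ^ 4)⁻¹ * ⟪v, w⟫ := by
    rw [hD v, hD w]
    have hnorm : ⟪x, x⟫ = ‖x‖ ^ 2 := real_inner_self_eq_norm_sq x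
    simp only [inner_sub_sub_self, real_inner_smul_left, real_inner_smul_right,
      inner_sub_left, inner_sub_right]
    rw [real_inner_comm v x, real_inner_comm w x] at *
    have hn : ‖x‖ ≠ 0 := norm_ne_zero_iff.mpr hx
    field_simp [hnorm]
    rw [hnorm]; ring
  refine ⟨key, ?_⟩
  rw [key, hρ x]
  have h4 : ‖x‖ ^ 4 ≠ 0 := pow_ne_zero _ (norm_ne_zero_iff.mpr hx)
  field_simp
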